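/- Let Ω ⊂ ℝ^d be a nonempty compact set, let G : M^+(Ω) × Ω → ℝ^{d'} be continuous (with the extended 1-Wasserstein metric on M^+(Ω)), and define f_G(μ) := G(μ,·)_# μ. Fix μ ∈ M^+(Ω), x ∈ Ω, and ψ ∈ C¹_0(ℝ^{d'}) that is constant in an open neighborhood of supp(f_G(μ)). Then there exists ε₀ > 0 such that for all ε ∈ (0, ε₀), ⟨ψ, f_G(μ + εδ_x)⟩ = ∫ ψ(G(μ, y)) dμ(y) + ε·ψ(G(μ + εδ_x, x)); consequently lim_{ε→0+} (⟨ψ, f_G(μ + εδ_x)⟩ − ⟨ψ, f_G(μ)⟩)/ε = ψ(G(μ, x)). -/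

import Mathlib

open MeasureTheory Filter Set

/-- The 1-Wasserstein distance, via Kantorovich–Rubinstein duality. -/
noncomputable def W1 {E : Type*} [MeasurableSpace E] [PseudoMetricSpace E]
    (μ ν : Measure E) : ℝ :=
  ⨆ φ : {φ : E → ℝ // LipschitzWith 1 φ}, ((∫ x, φ.1 x ∂μ) - ∫ x, φ.1 x ∂ν)

/-- The extension of the 1-Wasserstein distance to positive finite measures. -/
noncomputable def W1ext {E : Type*} [MeasurableSpace E] [PseudoMetricSpace E]
    (μ ν : Measure E) : ℝ :=
  W1 ((μ Set.univ)⁻¹ • μ) ((ν Set.univ)⁻¹ • ν)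
    + |(μ Set.univ).toReal - (ν Set.univ).toReal|

/-- `M⁺(Ω)`: the strictly positive finite Borel measures supported in `Ω`. -/
def Mplus {E : Type*} [MeasurableSpace E] (Ω : Set E) : Set (Measure E) :=
  {μ | μ Set.univ ≠ 0 ∧ μ Set.univ ≠ ⊤ ∧ μ Ωᶜ = 0}

/-- The support of a measure: points all of whose neighborhoods have positive measure. -/
def msupport {F : Type*} [TopologicalSpace F] [MeasurableSpace F] (μ : Measure F) : Set F :=
  {y | ∀ U ∈ nhds y, μ U ≠ 0}

/-- `C¹₀`: continuously differentiable functions with compact support. -/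
def IsC1c {F : Type*} [NormedAddCommGroup F] [NormedSpace ℝ F] (ψ : F → ℝ) : Prop :=
  ContDiff ℝ 1 ψ ∧ HasCompactSupport ψ

/-- Joint continuity of an in-context map `G : M⁺(Ω) × Ω → ℝ^{d'}`. -/
def W1ContinuousIC {E F : Type*} [MeasurableSpace E] [PseudoMetricSpace E] [PseudoMetricSpace F]
    (Ω : Set E) (G : Measure E → E → F) : Prop :=
  ∀ μ ∈ Mplus Ω, ∀ x ∈ Ω, ∀ ε > (0 : ℝ), ∃ δ > (0 : ℝ), ∀ ν ∈ Mplus Ω, ∀ y ∈ Ω,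
    W1ext μ ν + dist x y < δ → dist (G μ x) (G ν y) < ε

instance instLipNonempty {E : Type*} [PseudoMetricSpace E] :
    Nonempty {φ : E → ℝ // LipschitzWith 1 φ} :=
  ⟨⟨fun _ => 0, LipschitzWith.const' 0⟩⟩

lemma msupport_compl_null {F : Type*} [TopologicalSpace F] [SecondCountableTopology F]
    [MeasurableSpace F] (μ : Measure F) : μ (msupport μ)ᶜ = 0 := by
  obtain ⟨B, hBc, -, hB⟩ := TopologicalSpace.exists_countable_basis F
  have hsub : (msupport μ)ᶜ ⊆ ⋃ b ∈ {b ∈ B | μ b = 0}, b := by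
    intro y hy
    simp only [msupport, mem_compl_iff, mem_setOf_eq, not_forall] at hy
    obtain ⟨U, hU, hUnull⟩ := hy
    push_neg at hUnull
    obtain ⟨b, hbB, hyb, hbU⟩ := hB.mem_nhds_iff.1 hU
    exact mem_biUnion ⟨hbB, measure_mono_null hbU hUnull⟩ hyb
  refine measure_mono_null hsub ?_
  exact (measure_biUnion_null_iff (hBc.mono (sep_subset _ _))).2 fun b hb => hb.2

lemma W1ext_self {E : Type*} [MeasurableSpace E] [PseudoMetricSpace E] (μ : Measure E) :
    W1ext μ μ = 0 := by
  simp [W1ext, W1, ciSup_const]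

lemma W1ext_add_dirac_le {E : Type*} [MeasurableSpace E] [PseudoMetricSpace E]
    [OpensMeasurableSpace E] [MeasurableSingletonClass E]
    {Ω : Set E} (hΩb : Bornology.IsBounded Ω)
    {μ : Measure E} (hμ : μ ∈ Mplus Ω) {x : E} (hx : x ∈ Ω) {ε : ℝ} (hε : 0 < ε) :
    W1ext μ (μ + ENNReal.ofReal ε • Measure.dirac x)
      ≤ ε * (Metric.diam Ω / (μ Set.univ).toReal + 1) := by
  obtain ⟨hμ0, hμtop, hμΩ⟩ := hμ
  haveI : IsFiniteMeasure μ := ⟨hμtop.lt_top⟩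
  set m := μ Set.univ with hm
  set mR := m.toReal with hmR
  have hmRpos : 0 < mR := ENNReal.toReal_pos hμ0 hμtop
  set D := Metric.diam Ω with hD
  have hD0 : 0 ≤ D := Metric.diam_nonneg
  set e := ENNReal.ofReal ε with he
  have hetop : e ≠ ⊤ := ENNReal.ofReal_ne_top
  have heR : e.toReal = ε := ENNReal.toReal_ofReal hε.le
  have haeΩ : ∀ᵐ y ∂μ, y ∈ Ω := by
    rw [MeasureTheory.ae_iff]; exact hμΩ
  have huniv : (μ + e • Measure.dirac x) Set.univ = m + e := by
    simp [Measure.add_apply, Measure.smul_apply, smul_eq_mul, hm]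
  have habs : |m.toReal - ((μ + e • Measure.dirac x) Set.univ).toReal| = ε := by
    rw [huniv, ENNReal.toReal_add hμtop hetop, heR]
    rw [abs_sub_comm]
    simp [abs_of_nonneg hε.le]
  rw [W1ext, ← hm, habs, huniv]
  have hW1 : W1 (m⁻¹ • μ) ((m + e)⁻¹ • (μ + e • Measure.dirac x)) ≤ ε * (D / mR) := by
    apply ciSup_le
    rintro ⟨φ, hφ⟩
    have hφc : Continuous φ := hφ.continuous
    have hbnd : ∀ᵐ y ∂μ, ‖φ y - φ x‖ ≤ D := by
      filter_upwards [haeΩ] with y hy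
      calc ‖φ y - φ x‖ ≤ 1 * dist y x := by
            simpa [Real.dist_eq] using hφ.dist_le_mul y x
        _ ≤ D := by simpa using Metric.dist_le_diam_of_mem hΩb hy hx
    have hint : Integrable φ μ := by
      refine (integrable_const (‖φ x‖ + D)).mono' hφc.aestronglyMeasurable ?_
      filter_upwards [hbnd] with y hy
      calc ‖φ y‖ ≤ ‖φ x‖ + ‖φ y - φ x‖ := by
            simpa using norm_add_le (φ x) (φ y - φ x)
        _ ≤ ‖φ x‖ + D := by linarith
    have hintd : Integrable φ (e • Measure.dirac x) := by
      refine Integrable.smul_measure ?_ hetop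
      refine (integrable_const ‖φ x‖).mono' hφc.aestronglyMeasurable ?_
      rw [MeasureTheory.ae_dirac_eq]
      exact Filter.eventually_pure.2 le_rfl
    set I := ∫ y, φ y ∂μ with hI
    have h1 : (∫ y, φ y ∂(m⁻¹ • μ)) = mR⁻¹ * I := by
      rw [integral_smul_measure, ENNReal.toReal_inv, smul_eq_mul]
    have h2 : (∫ y, φ y ∂((m + e)⁻¹ • (μ + e • Measure.dirac x)))
        = (mR + ε)⁻¹ * (I + ε * φ x) := by
      rw [integral_smul_measure, integral_add_measure hint hintd,
        integral_smul_measure, integral_dirac, ENNReal.toReal_inv,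
        ENNReal.toReal_add hμtop hetop, heR, smul_eq_mul, smul_eq_mul]
    rw [h1, h2]
    have hImR : I ≤ (φ x + D) * mR := by
      have : I ≤ ∫ _, (φ x + D) ∂μ := by
        apply integral_mono_ae hint (integrable_const _)
        filter_upwards [hbnd] with y hy
        have := abs_le.1 (by simpa [Real.norm_eq_abs] using hy)
        linarith [this.2]
      have h' : I ≤ (φ x + D) * μ.real Set.univ := by
        simpa [integral_const, measure_univ, smul_eq_mul, mul_comm] using this
      exact h'
    have hkey : mR⁻¹ * I - (mR + ε)⁻¹ * (I + ε * φ x)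
        = (ε / (mR + ε)) * (I / mR - φ x) := by
      field_simp
      ring
    rw [hkey]
    have h3 : I / mR - φ x ≤ D := by
      rw [div_sub' hmRpos.ne', div_le_iff₀ hmRpos]
      nlinarith
    calc (ε / (mR + ε)) * (I / mR - φ x) ≤ (ε / (mR + ε)) * D := by
          apply mul_le_mul_of_nonneg_left h3 (by positivity)
      _ ≤ (ε / mR) * D := by
          apply mul_le_mul_of_nonneg_right _ hD0
          apply div_le_div_of_nonneg_left hε.le hmRpos (by linarith)
      _ = ε * (D / mR) := by ring
  linarith [hW1]

lemma uniform_G {E F : Type*} [MeasurableSpace E] [PseudoMetricSpace E] [PseudoMetricSpace F]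
    {Ω : Set E} (hΩcpt : IsCompact Ω) {G : Measure E → E → F} (hG : W1ContinuousIC Ω G)
    {μ : Measure E} (hμ : μ ∈ Mplus Ω) {ρ : ℝ} (hρ : 0 < ρ) :
    ∃ δ > (0 : ℝ), ∀ ν ∈ Mplus Ω, W1ext μ ν < δ → ∀ y ∈ Ω, dist (G μ y) (G ν y) < ρ := by
  choose! δf hδpos hδ using fun z (hz : z ∈ Ω) => hG μ hμ z hz (ρ/2) (by positivity)
  obtain ⟨t, htΩ, hcov⟩ := hΩcpt.elim_nhds_subcover (fun z => Metric.ball z (δf z / 2))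
    (fun z hz => Metric.ball_mem_nhds z (by linarith [hδpos z hz]))
  rcases t.eq_empty_or_nonempty with rfl | ht
  · refine ⟨1, one_pos, fun ν hν hW1 y hy => absurd (hcov hy) (by simp)⟩
  · refine ⟨t.inf' ht (fun z => δf z / 2), ?_, ?_⟩
    · rw [gt_iff_lt, Finset.lt_inf'_iff]
      exact fun z hz => by linarith [hδpos z (htΩ z hz)]
    · intro ν hν hW1 y hy
      obtain ⟨z, hzt, hyz⟩ := by simpa using hcov hy
      have hzΩ : z ∈ Ω := htΩ z hzt
      have hdyz : dist y z < δf z / 2 := by simpa [Metric.mem_ball] using hyz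
      have h1 : dist (G μ z) (G μ y) < ρ/2 := by
        apply hδ z hzΩ μ hμ y hy
        rw [W1ext_self]
        rw [dist_comm]
        linarith [hδpos z hzΩ]
      have h2 : dist (G μ z) (G ν y) < ρ/2 := by
        apply hδ z hzΩ ν hν y hy
        have hle : t.inf' ht (fun z => δf z / 2) ≤ δf z / 2 := Finset.inf'_le _ hzt
        rw [dist_comm]
        linarith
      calc dist (G μ y) (G ν y) ≤ dist (G μ y) (G μ z) + dist (G μ z) (G ν y) :=
            dist_triangle _ _ _
        _ < ρ/2 + ρ/2 := by rw [dist_comm (G μ y)]; linarith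
        _ = ρ := by ring

set_option maxHeartbeats 1000000

/-- For `f_G(μ) = G(μ,·)_♯ μ` with `G` continuous, and `ψ ∈ C¹₀` constant in
an open neighborhood of `supp f_G(μ)`, for all sufficiently small `ε > 0` one has
`⟨ψ, f_G(μ + εδₓ)⟩ = ∫ ψ(G(μ,y)) dμ(y) + ε ψ(G(μ + εδₓ, x))`; consequently
`lim_{ε→0⁺} (⟨ψ, f_G(μ + εδₓ)⟩ − ⟨ψ, f_G(μ)⟩)/ε = ψ(G(μ,x))`. -/
theorem inContext_derivative_computation {d d' : ℕ}
    (Ω : Set (EuclideanSpace ℝ (Fin d))) (hΩne : Ω.Nonempty) (hΩcpt : IsCompact Ω)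
    (G : Measure (EuclideanSpace ℝ (Fin d)) → EuclideanSpace ℝ (Fin d) →
      EuclideanSpace ℝ (Fin d'))
    (hG : W1ContinuousIC Ω G)
    (μ : Measure (EuclideanSpace ℝ (Fin d))) (hμ : μ ∈ Mplus Ω)
    (x : EuclideanSpace ℝ (Fin d)) (hx : x ∈ Ω)
    (ψ : EuclideanSpace ℝ (Fin d') → ℝ) (hψ : IsC1c ψ)
    (hconst : ∃ U : Set (EuclideanSpace ℝ (Fin d')), IsOpen U ∧
      msupport (Measure.map (G μ) μ) ⊆ U ∧
      ∃ cst : ℝ, Set.EqOn ψ (fun _ => cst) U) :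
    ∃ ε₀ > (0 : ℝ),
      (∀ ε ∈ Set.Ioo (0 : ℝ) ε₀,
        (∫ y, ψ y ∂ (Measure.map (G (μ + ENNReal.ofReal ε • Measure.dirac x))
            (μ + ENNReal.ofReal ε • Measure.dirac x)))
          = (∫ y, ψ (G μ y) ∂μ)
            + ε * ψ (G (μ + ENNReal.ofReal ε • Measure.dirac x) x)) ∧
      Filter.Tendsto
        (fun ε : ℝ =>
          ((∫ y, ψ y ∂ (Measure.map (G (μ + ENNReal.ofReal ε • Measure.dirac x))
              (μ + ENNReal.ofReal ε • Measure.dirac x)))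
            - ∫ y, ψ y ∂ (Measure.map (G μ) μ)) / ε)
        (nhdsWithin 0 (Set.Ioi 0)) (nhds (ψ (G μ x))) := by
  classical
  obtain ⟨U, hUopen, hSU, cst, hcst⟩ := hconst
  obtain ⟨hμ0, hμtop, hμΩ⟩ := id hμ
  haveI : IsFiniteMeasure μ := ⟨hμtop.lt_top⟩
  have hΩmeas : MeasurableSet Ω := hΩcpt.isClosed.measurableSet
  have hψc : Continuous ψ := hψ.1.continuous
  obtain ⟨Cψ, hCψ⟩ := hψ.2.exists_bound_of_continuous hψc
  have hmRpos : (0:ℝ) < (μ Set.univ).toReal := ENNReal.toReal_pos hμ0 hμtop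
  have hD0 : (0:ℝ) ≤ Metric.diam Ω := Metric.diam_nonneg
  set C := Metric.diam Ω / (μ Set.univ).toReal + 1 with hC
  have hCpos : 0 < C := by
    have := div_nonneg hD0 hmRpos.le
    rw [hC]; linarith
  -- continuity of G ν on Ω
  have hcont : ∀ ν ∈ Mplus Ω, ContinuousOn (G ν) Ω := by
    intro ν hν
    rw [Metric.continuousOn_iff]
    intro b hb η hη
    obtain ⟨δ, hδpos, hδ⟩ := hG ν hν b hb η hη
    refine ⟨δ, hδpos, fun a ha hab => ?_⟩
    rw [dist_comm]
    exact hδ ν hν a ha (by rw [W1ext_self, dist_comm]; simpa using hab)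
  -- a.e. measurability
  have haemeas : ∀ ν ∈ Mplus Ω, ∀ μ' : Measure (EuclideanSpace ℝ (Fin d)), μ' Ωᶜ = 0 →
      AEMeasurable (G ν) μ' := by
    intro ν hν μ' hμ'
    have h1 : ∀ᵐ y ∂μ', y ∈ Ω := by rw [ae_iff]; exact hμ'
    have h2 := (hcont ν hν).aemeasurable hΩmeas (μ := μ')
    rwa [Measure.restrict_eq_self_of_ae_mem h1] at h2
  have haeΩ : ∀ᵐ y ∂μ, y ∈ Ω := by rw [ae_iff]; exact hμΩ
  have haemeasμ : AEMeasurable (G μ) μ := haemeas μ hμ μ hμΩ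
  -- the support S is compact
  have hK : IsCompact (G μ '' Ω) := hΩcpt.image_of_continuousOn (hcont μ hμ)
  set S := msupport (Measure.map (G μ) μ) with hS
  have hmapK : (Measure.map (G μ) μ) (G μ '' Ω)ᶜ = 0 := by
    rw [Measure.map_apply_of_aemeasurable haemeasμ hK.isClosed.measurableSet.compl]
    refine measure_mono_null ?_ hμΩ
    intro y hy
    simp only [mem_compl_iff, mem_preimage] at *
    exact fun hyΩ => hy (mem_image_of_mem _ hyΩ)
  have hSK : S ⊆ G μ '' Ω := by
    intro z hz
    by_contra hzK
    exact hz _ (hK.isClosed.isOpen_compl.mem_nhds hzK) hmapK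
  have hSclosed : IsClosed S := by
    rw [← isOpen_compl_iff, isOpen_iff_mem_nhds]
    intro z hz
    have hz' : ¬ ∀ V ∈ nhds z, Measure.map (G μ) μ V ≠ 0 := hz
    push_neg at hz'
    obtain ⟨V, hV, hV0⟩ := hz'
    refine Filter.mem_of_superset (interior_mem_nhds.2 hV) ?_
    exact fun w hw hwS => hwS (interior V) (isOpen_interior.mem_nhds hw)
      (measure_mono_null interior_subset hV0)
  have hScpt : IsCompact S := hK.of_isClosed_subset hSclosed hSK
  obtain ⟨ρ, hρpos, hρsub⟩ := hScpt.exists_thickening_subset_open hUopen hSU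
  -- a.e. G μ y ∈ S
  have haeS : ∀ᵐ y ∂μ, G μ y ∈ S := by
    have h1 : μ (G μ ⁻¹' Sᶜ) = 0 := by
      rw [← Measure.map_apply_of_aemeasurable haemeasμ hSclosed.measurableSet.compl]
      exact msupport_compl_null _
    rw [ae_iff]; exact h1
  -- uniform closeness
  obtain ⟨δ₁, hδ₁pos, hδ₁⟩ := uniform_G hΩcpt hG hμ hρpos
  set ε₀ := δ₁ / C with hε₀def
  have hε₀ : 0 < ε₀ := by positivity
  have hdiracΩ : Measure.dirac x Ωᶜ = 0 := by
    rw [Measure.dirac_apply' _ hΩmeas.compl]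
    simp [hx]
  have hMε : ∀ ε : ℝ, 0 < ε → (μ + ENNReal.ofReal ε • Measure.dirac x) ∈ Mplus Ω := by
    intro ε hε
    refine ⟨?_, ?_, ?_⟩
    · have : (μ + ENNReal.ofReal ε • Measure.dirac x) Set.univ
          = μ Set.univ + ENNReal.ofReal ε := by
        simp [Measure.add_apply, Measure.smul_apply, smul_eq_mul]
      rw [this]
      simp only [ne_eq, add_eq_zero, not_and]
      exact fun h => absurd h hμ0
    · have : (μ + ENNReal.ofReal ε • Measure.dirac x) Set.univ
          = μ Set.univ + ENNReal.ofReal ε := by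
        simp [Measure.add_apply, Measure.smul_apply, smul_eq_mul]
      rw [this]
      exact ENNReal.add_ne_top.2 ⟨hμtop, ENNReal.ofReal_ne_top⟩
    · simp [Measure.add_apply, Measure.smul_apply, hμΩ, hdiracΩ]
  have hW1ε : ∀ ε : ℝ, 0 < ε →
      W1ext μ (μ + ENNReal.ofReal ε • Measure.dirac x) ≤ ε * C := by
    intro ε hε
    rw [hC]
    exact W1ext_add_dirac_le hΩcpt.isBounded hμ hx hε
  -- Part 1
  have key : ∀ ε ∈ Set.Ioo (0:ℝ) ε₀,
      (∫ y, ψ y ∂ (Measure.map (G (μ + ENNReal.ofReal ε • Measure.dirac x))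
          (μ + ENNReal.ofReal ε • Measure.dirac x)))
        = (∫ y, ψ (G μ y) ∂μ)
          + ε * ψ (G (μ + ENNReal.ofReal ε • Measure.dirac x) x) := by
    rintro ε ⟨hε0, hεε₀⟩
    set ν := μ + ENNReal.ofReal ε • Measure.dirac x with hν
    have hνM : ν ∈ Mplus Ω := hMε ε hε0
    have hGν : AEMeasurable (G ν) ν := haemeas ν hνM ν hνM.2.2
    have hGνμ : AEMeasurable (G ν) μ := haemeas ν hνM μ hμΩ
    have hclose : ∀ y ∈ Ω, dist (G μ y) (G ν y) < ρ := by
      apply hδ₁ ν hνM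
      calc W1ext μ ν ≤ ε * C := hW1ε ε hε0
        _ < ε₀ * C := by exact mul_lt_mul_of_pos_right hεε₀ hCpos
        _ = δ₁ := div_mul_cancel₀ _ hCpos.ne'
    have hae2 : ∀ᵐ y ∂μ, ψ (G ν y) = ψ (G μ y) := by
      filter_upwards [haeΩ, haeS] with y hyΩ hyS
      have h1 : G ν y ∈ U := hρsub (Metric.mem_thickening_iff.2
        ⟨G μ y, hyS, by rw [dist_comm]; exact hclose y hyΩ⟩)
      rw [hcst h1, hcst (hSU hyS)]
    have hintν : Integrable (fun y => ψ (G ν y)) μ :=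
      (integrable_const Cψ).mono' (hψc.measurable.comp_aemeasurable hGνμ).aestronglyMeasurable
        (Filter.Eventually.of_forall fun y => hCψ _)
    have hintd : Integrable (fun y => ψ (G ν y)) (ENNReal.ofReal ε • Measure.dirac x) := by
      refine Integrable.smul_measure ?_ ENNReal.ofReal_ne_top
      refine (integrable_const Cψ).mono'
        (hψc.measurable.comp_aemeasurable (haemeas ν hνM (Measure.dirac x) hdiracΩ)).aestronglyMeasurable
        (Filter.Eventually.of_forall fun y => hCψ _)
    calc (∫ y, ψ y ∂ (Measure.map (G ν) ν)) = ∫ y, ψ (G ν y) ∂ν :=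
          integral_map hGν hψc.aestronglyMeasurable
      _ = (∫ y, ψ (G ν y) ∂μ) + ∫ y, ψ (G ν y) ∂(ENNReal.ofReal ε • Measure.dirac x) :=
          integral_add_measure hintν hintd
      _ = (∫ y, ψ (G μ y) ∂μ) + ε * ψ (G ν x) := by
          rw [integral_congr_ae hae2, integral_smul_measure, integral_dirac,
            ENNReal.toReal_ofReal hε0.le, smul_eq_mul]
  refine ⟨ε₀, hε₀, key, ?_⟩
  -- Part 2
  have hmap0 : (∫ y, ψ y ∂ (Measure.map (G μ) μ)) = ∫ y, ψ (G μ y) ∂μ :=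
    integral_map haemeasμ hψc.aestronglyMeasurable
  have heq : (fun ε : ℝ =>
      ((∫ y, ψ y ∂ (Measure.map (G (μ + ENNReal.ofReal ε • Measure.dirac x))
          (μ + ENNReal.ofReal ε • Measure.dirac x)))
        - ∫ y, ψ y ∂ (Measure.map (G μ) μ)) / ε)
      =ᶠ[nhdsWithin (0:ℝ) (Set.Ioi 0)]
      (fun ε : ℝ => ψ (G (μ + ENNReal.ofReal ε • Measure.dirac x) x)) := by
    filter_upwards [Ioo_mem_nhdsGT_of_mem ⟨le_refl (0:ℝ), hε₀⟩] with ε hε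
    rw [key ε hε, hmap0, add_sub_cancel_left, mul_div_cancel_left₀ _ hε.1.ne']
  have hR : Filter.Tendsto (fun ε : ℝ => ψ (G (μ + ENNReal.ofReal ε • Measure.dirac x) x))
      (nhdsWithin 0 (Set.Ioi 0)) (nhds (ψ (G μ x))) := by
    rw [Metric.tendsto_nhds]
    intro η hη
    obtain ⟨η', hη'pos, hη'⟩ := Metric.continuous_iff.1 hψc (G μ x) η hη
    obtain ⟨δ₂, hδ₂pos, hδ₂⟩ := hG μ hμ x hx η' hη'pos
    have hmem : Set.Ioo (0:ℝ) (min ε₀ (δ₂ / C)) ∈ nhdsWithin (0:ℝ) (Set.Ioi 0) :=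
      Ioo_mem_nhdsGT_of_mem ⟨le_refl (0:ℝ), lt_min hε₀ (div_pos hδ₂pos hCpos)⟩
    filter_upwards [hmem] with ε hε
    have hε0 : 0 < ε := hε.1
    have hνM := hMε ε hε0
    have hεlt : ε < δ₂ / C := lt_of_lt_of_le hε.2 (min_le_right _ _)
    have hW1 : W1ext μ (μ + ENNReal.ofReal ε • Measure.dirac x) + dist x x < δ₂ := by
      rw [dist_self, add_zero]
      calc W1ext μ (μ + ENNReal.ofReal ε • Measure.dirac x) ≤ ε * C := hW1ε ε hε0
        _ < (δ₂ / C) * C := mul_lt_mul_of_pos_right hεlt hCpos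
        _ = δ₂ := div_mul_cancel₀ _ hCpos.ne'
    have hd := hδ₂ _ hνM x hx hW1
    exact hη' _ (by rw [dist_comm]; exact hd)
  exact Filter.Tendsto.congr' heq.symm hR
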